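/- Let K_X, K_Y ∈ ℝ^{n×n} be symmetric positive semidefinite, and suppose L_X, B_X ∈ ℝ^{n×m_X} satisfy B_Xᵀ L_X = I, K_X B_X = L_X, with V_X orthogonal and V_X Λ_X V_Xᵀ = L_Xᵀ L_X for Λ_X diagonal, Q_X = B_X V_X; analogously for L_Y, B_Y, V_Y, Λ_Y, Q_Y with K_Y. Then for every F̃ ∈ ℝ^{m_Y×m_X} and λ > 0, inserting F = Q_Y F̃ Q_Xᵀ into the full objective gives the exact identity R_λ(Q_Y F̃ Q_Xᵀ) = −2·trace(L_Y V_Y F̃ V_Xᵀ L_Xᵀ) + trace(F̃ Λ_X F̃ᵀ) + nλ·trace(F̃ F̃ᵀ), where R_λ(F) = −2·trace(K_Y F K_X) + trace(Fᵀ K_Y F K_X (K_X + nλ I_n)). -/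
import Mathlib


open Matrix

/-- Inserting the low-rank ansatz `F = Q_Y F̃ Q_Xᵀ` into the full CME objective
yields the exact reduced form
`R_λ(Q_Y F̃ Q_Xᵀ) = −2 trace(L_Y V_Y F̃ V_Xᵀ L_Xᵀ) + trace(F̃ Λ_X F̃ᵀ) + nλ trace(F̃ F̃ᵀ)`. -/
theorem cme_reduced_objective_identity (n mX mY : ℕ)
    (KX KY : Matrix (Fin n) (Fin n) ℝ) (hKX : KX.PosSemidef) (hKY : KY.PosSemidef)
    (LX BX : Matrix (Fin n) (Fin mX) ℝ) (hBLX : BXᵀ * LX = 1) (hKBX : KX * BX = LX)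
    (VX LamX : Matrix (Fin mX) (Fin mX) ℝ) (hVX : VXᵀ * VX = 1) (hVX' : VX * VXᵀ = 1)
    (hLamX : LamX.IsDiag) (hspecX : VX * LamX * VXᵀ = LXᵀ * LX)
    (LY BY : Matrix (Fin n) (Fin mY) ℝ) (hBLY : BYᵀ * LY = 1) (hKBY : KY * BY = LY)
    (VY LamY : Matrix (Fin mY) (Fin mY) ℝ) (hVY : VYᵀ * VY = 1) (hVY' : VY * VYᵀ = 1)
    (hLamY : LamY.IsDiag) (hspecY : VY * LamY * VYᵀ = LYᵀ * LY)
    (lam : ℝ) (hlam : 0 < lam) :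
    ∀ Ft : Matrix (Fin mY) (Fin mX) ℝ,
      -2 * (KY * ((BY * VY) * Ft * (BX * VX)ᵀ) * KX).trace +
        (((BY * VY) * Ft * (BX * VX)ᵀ)ᵀ * KY * ((BY * VY) * Ft * (BX * VX)ᵀ) * KX *
          (KX + ((n : ℝ) * lam) • 1)).trace =
      -2 * (LY * VY * Ft * VXᵀ * LXᵀ).trace + (Ft * LamX * Ftᵀ).trace +
        (n : ℝ) * lam * (Ft * Ftᵀ).trace := by
  intro Ft
  have hsX : KXᵀ = KX := hKX.1
  have hsY : KYᵀ = KY := hKY.1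
  have hBK : BXᵀ * KX = LXᵀ := by rw [← hKBX, Matrix.transpose_mul, hsX]
  have hYc : ∀ {k : ℕ} (X : Matrix (Fin mY) (Fin k) ℝ),
      BYᵀ * (KY * (BY * X)) = X := by
    intro k X
    rw [← Matrix.mul_assoc KY BY X, hKBY, ← Matrix.mul_assoc, hBLY, Matrix.one_mul]
  have hXc : ∀ {k : ℕ} (X : Matrix (Fin mX) (Fin k) ℝ),
      BXᵀ * (KX * (BX * X)) = X := by
    intro k X
    rw [← Matrix.mul_assoc KX BX X, hKBX, ← Matrix.mul_assoc, hBLX, Matrix.one_mul]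
  have hVYc : ∀ {k : ℕ} (X : Matrix (Fin mY) (Fin k) ℝ), VYᵀ * (VY * X) = X := by
    intro k X; rw [← Matrix.mul_assoc, hVY, Matrix.one_mul]
  have hVXc : ∀ {k : ℕ} (X : Matrix (Fin mX) (Fin k) ℝ), VXᵀ * (VX * X) = X := by
    intro k X; rw [← Matrix.mul_assoc, hVX, Matrix.one_mul]
  have e1 : KY * ((BY * VY) * Ft * (BX * VX)ᵀ) * KX = LY * VY * Ft * VXᵀ * LXᵀ := by
    rw [← hKBX, ← hKBY]
    simp only [Matrix.transpose_mul, hsX, Matrix.mul_assoc]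
  have e2 : ((BY * VY) * Ft * (BX * VX)ᵀ)ᵀ * KY * ((BY * VY) * Ft * (BX * VX)ᵀ)
      = BX * (VX * ((Ftᵀ * Ft) * (VXᵀ * BXᵀ))) := by
    simp only [Matrix.transpose_mul, Matrix.transpose_transpose, Matrix.mul_assoc]
    rw [hYc, hVYc]
  have e3 : (BX * (VX * ((Ftᵀ * Ft) * (VXᵀ * BXᵀ))) * KX * KX).trace
      = (Ft * LamX * Ftᵀ).trace := by
    simp only [Matrix.mul_assoc]
    rw [Matrix.trace_mul_comm]
    simp only [Matrix.mul_assoc]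
    rw [hKBX, ← Matrix.mul_assoc BXᵀ KX LX, hBK, ← hspecX]
    simp only [Matrix.mul_assoc]
    rw [hVXc, Matrix.trace_mul_comm]
    simp only [Matrix.mul_assoc]
    rw [hVX, Matrix.mul_one, Matrix.trace_mul_comm]
    simp only [Matrix.mul_assoc]
  have e4 : (BX * (VX * ((Ftᵀ * Ft) * (VXᵀ * BXᵀ))) * KX).trace = (Ft * Ftᵀ).trace := by
    simp only [Matrix.mul_assoc]
    rw [Matrix.trace_mul_comm]
    simp only [Matrix.mul_assoc]
    rw [hKBX, hBLX, Matrix.mul_one, Matrix.trace_mul_comm]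
    simp only [Matrix.mul_assoc]
    rw [hVX, Matrix.mul_one, Matrix.trace_mul_comm]
  rw [e1, e2, Matrix.mul_add, Matrix.mul_smul, Matrix.mul_one, Matrix.trace_add,
    Matrix.trace_smul, e3, e4, smul_eq_mul]
  ring
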